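/- Let s₁ be the real 4-dimensional Lie algebra with basis e₁, e₂, e₃, e₄ and nonzero brackets ⁅e₂, e₄⁆ = −e₁ and ⁅e₃, e₄⁆ = −e₃ (all other brackets of basis elements zero, extended bilinearly and antisymmetrically). An antisymmetric tensor w ∈ s₁ ⊗[ℝ] s₁ (i.e. one satisfying (swap) w = −w, where swap is the canonical flip of the two tensor factors) is s₁-invariant — that is, ⁅v, w⁆ = 0 for all v ∈ s₁ under the canonical action of s₁ on s₁ ⊗ s₁ — if and only if w is a real scalar multiple of e₁ ⊗ e₂ − e₂ ⊗ e₁. -/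

import Mathlib

open TensorProduct

/-- For the real 4-dimensional Lie algebra `s₁` (Šnobl–Winternitz `s_{4,1}`), an
antisymmetric tensor `w ∈ s₁ ⊗ s₁` is `s₁`-invariant if and only if it is a real
multiple of `e₁ ⊗ e₂ - e₂ ⊗ e₁`, i.e. `(Λ²s₁)^{s₁} = ⟨e₁ ∧ e₂⟩`. -/
theorem stmt_16 {L : Type*} [LieRing L] [LieAlgebra ℝ L]
    (b : Module.Basis (Fin 4) ℝ L)
    (h12 : ⁅b 0, b 1⁆ = 0) (h13 : ⁅b 0, b 2⁆ = 0) (h14 : ⁅b 0, b 3⁆ = 0)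
    (h23 : ⁅b 1, b 2⁆ = 0) (h24 : ⁅b 1, b 3⁆ = -b 0) (h34 : ⁅b 2, b 3⁆ = -b 2)
    (w : L ⊗[ℝ] L) (hanti : TensorProduct.comm ℝ L L w = -w) :
    (∀ v : L, ⁅v, w⁆ = 0) ↔
      ∃ lam : ℝ, w = lam • (b 0 ⊗ₜ[ℝ] b 1 - b 1 ⊗ₜ[ℝ] b 0) := by
  have h21 : ⁅b 1, b 0⁆ = 0 := by rw [← lie_skew, h12, neg_zero]
  have h31 : ⁅b 2, b 0⁆ = 0 := by rw [← lie_skew, h13, neg_zero]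
  have h41 : ⁅b 3, b 0⁆ = 0 := by rw [← lie_skew, h14, neg_zero]
  have h32 : ⁅b 2, b 1⁆ = 0 := by rw [← lie_skew, h23, neg_zero]
  have h42 : ⁅b 3, b 1⁆ = b 0 := by rw [← lie_skew, h24, neg_neg]
  have h43 : ⁅b 3, b 2⁆ = b 2 := by rw [← lie_skew, h34, neg_neg]
  constructor
  · intro hlie
    set B := Module.Basis.tensorProduct b b with hBdef
    set a : Fin 4 × Fin 4 → ℝ := fun p => B.repr w p with hadef
    have hw : w = ∑ p : Fin 4 × Fin 4, a p • (b p.1 ⊗ₜ[ℝ] b p.2) := by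
      conv_lhs => rw [← B.sum_repr w]
      refine Finset.sum_congr rfl fun p _ => ?_
      rw [hBdef, Module.Basis.tensorProduct_apply']
    rw [Fintype.sum_prod_type] at hw
    simp only [Fin.sum_univ_four] at hw
    -- antisymmetry relations
    have hA := hanti
    rw [hw] at hA
    simp only [map_add, map_smul, comm_tmul, neg_add, ← neg_smul] at hA
    have anti : ∀ i j : Fin 4, a (j, i) = -a (i, j) := by
      intro i j
      have h := congrArg (fun x => B.repr x (i, j)) hA
      simp only [map_add, map_smul, map_neg, Finsupp.coe_add, Finsupp.coe_smul,
        Finsupp.coe_neg, Pi.add_apply, Pi.smul_apply, Pi.neg_apply, hBdef,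
        Module.Basis.tensorProduct_repr_tmul_apply, Module.Basis.repr_self_apply, smul_eq_mul,
        mul_ite, mul_one, mul_zero] at h
      fin_cases i <;> fin_cases j <;> simpa using h
    -- invariance under b 3
    have h3 : ⁅b 3, w⁆ = 0 := hlie (b 3)
    rw [hw] at h3
    simp only [lie_add, lie_smul, TensorProduct.LieModule.lie_tmul_right,
      h41, h42, h43, lie_self, zero_tmul, tmul_zero, zero_add, add_zero,
      smul_zero] at h3
    have key3 : ∀ i j : Fin 4, B.repr (0 : L ⊗[ℝ] L) (i, j) = 0 := by simp
    have e12 : a (1, 2) = 0 := by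
      have h := congrArg (fun x => B.repr x (1, 2)) h3
      simp only [map_add, map_smul, map_zero, Finsupp.coe_add, Finsupp.coe_smul,
        Finsupp.coe_zero, Pi.add_apply, Pi.smul_apply, Pi.zero_apply, hBdef,
        Module.Basis.tensorProduct_repr_tmul_apply, Module.Basis.repr_self_apply, smul_eq_mul,
        mul_ite, mul_one, mul_zero] at h
      simpa using h
    have e13 : a (1, 3) = 0 := by
      have h := congrArg (fun x => B.repr x (0, 3)) h3
      simp only [map_add, map_smul, map_zero, Finsupp.coe_add, Finsupp.coe_smul,
        Finsupp.coe_zero, Pi.add_apply, Pi.smul_apply, Pi.zero_apply, hBdef,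
        Module.Basis.tensorProduct_repr_tmul_apply, Module.Basis.repr_self_apply, smul_eq_mul,
        mul_ite, mul_one, mul_zero] at h
      simpa using h
    have e23 : a (2, 3) = 0 := by
      have h := congrArg (fun x => B.repr x (2, 3)) h3
      simp only [map_add, map_smul, map_zero, Finsupp.coe_add, Finsupp.coe_smul,
        Finsupp.coe_zero, Pi.add_apply, Pi.smul_apply, Pi.zero_apply, hBdef,
        Module.Basis.tensorProduct_repr_tmul_apply, Module.Basis.repr_self_apply, smul_eq_mul,
        mul_ite, mul_one, mul_zero] at h
      simpa using h
    have e02 : a (0, 2) = 0 := by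
      have h := congrArg (fun x => B.repr x (0, 2)) h3
      simp only [map_add, map_smul, map_zero, Finsupp.coe_add, Finsupp.coe_smul,
        Finsupp.coe_zero, Pi.add_apply, Pi.smul_apply, Pi.zero_apply, hBdef,
        Module.Basis.tensorProduct_repr_tmul_apply, Module.Basis.repr_self_apply, smul_eq_mul,
        mul_ite, mul_one, mul_zero] at h
      simp only [e12] at h
      simpa using h
    -- invariance under b 2
    have h2 : ⁅b 2, w⁆ = 0 := hlie (b 2)
    rw [hw] at h2
    simp only [lie_add, lie_smul, TensorProduct.LieModule.lie_tmul_right,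
      h31, h32, h23, h34, lie_self, zero_tmul, tmul_zero, zero_add, add_zero,
      smul_zero, tmul_neg, neg_tmul] at h2
    have e03 : a (0, 3) = 0 := by
      have h := congrArg (fun x => B.repr x (0, 2)) h2
      simp only [map_add, map_smul, map_neg, map_zero, Finsupp.coe_add, Finsupp.coe_smul,
        Finsupp.coe_neg, Finsupp.coe_zero, Pi.add_apply, Pi.smul_apply, Pi.neg_apply,
        Pi.zero_apply, hBdef,
        Module.Basis.tensorProduct_repr_tmul_apply, Module.Basis.repr_self_apply, smul_eq_mul,
        mul_ite, mul_one, mul_zero] at h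
      simpa using h
    -- diagonal entries vanish
    have e00 : a (0, 0) = 0 := by have := anti 0 0; linarith
    have e11 : a (1, 1) = 0 := by have := anti 1 1; linarith
    have e22 : a (2, 2) = 0 := by have := anti 2 2; linarith
    have e33 : a (3, 3) = 0 := by have := anti 3 3; linarith
    have e21 : a (2, 1) = 0 := by rw [anti 1 2, e12, neg_zero]
    have e31 : a (3, 1) = 0 := by rw [anti 1 3, e13, neg_zero]
    have e32 : a (3, 2) = 0 := by rw [anti 2 3, e23, neg_zero]
    have e20 : a (2, 0) = 0 := by rw [anti 0 2, e02, neg_zero]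
    have e30 : a (3, 0) = 0 := by rw [anti 0 3, e03, neg_zero]
    have e10 : a (1, 0) = -a (0, 1) := anti 0 1
    refine ⟨a (0, 1), ?_⟩
    rw [hw]
    rw [e00, e02, e03, e11, e12, e13, e20, e21, e22, e23, e30, e31, e32, e33, e10]
    simp only [zero_smul, add_zero, zero_add, neg_smul]
    module
  · rintro ⟨lam, rfl⟩ v
    have hv : v = ∑ i, b.repr v i • b i := (b.sum_repr v).symm
    rw [hv]
    simp only [Fin.sum_univ_four, add_lie, smul_lie, lie_smul, lie_sub,
      TensorProduct.LieModule.lie_tmul_right, h12, h21, h13, h31, h14, h41,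
      h23, h32, h24, h42, h34, h43, lie_self, zero_tmul, tmul_zero, zero_add,
      add_zero, sub_self, smul_zero, neg_tmul, tmul_neg]
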